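/- Unlabeled chip-firing stabilization for connected configurations: let v ∈ ℤ^N be weakly decreasing (an unlabeled chip configuration) and let v~ be its pseudo-stabilization, the unique weakly decreasing vector with all entries distinct, at most one 'gap' (at most one integer t with v~_N < t < v~_1 not among the entries), and the same coordinate sum as v. If for all 1 ≤ i < N the strict inequality v₁ + ⋯ + vᵢ < v~₁ + ⋯ + v~ᵢ holds, then every maximal sequence of unlabeled chip-firing moves (replacing two equal entries v_i = v_j by v_i + 1, v_j − 1 and re-sorting) starting from v terminates at v~. -/

import Mathlib

namespace CF

/-- One unlabeled chip-firing move on a multiset of chip positions: two chips at the same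
position `a` move to `a + 1` and `a − 1`. -/
def chipStep (M M' : Multiset ℤ) : Prop :=
  ∃ a : ℤ, ∃ R : Multiset ℤ, M = a ::ₘ a ::ₘ R ∧ M' = (a + 1) ::ₘ (a - 1) ::ₘ R

/-- partial sums -/
def PS {n : ℕ} (g : Fin (n + 1) → ℤ) (k : ℕ) : ℤ :=
  ∑ i : Fin (n + 1), if (i : ℕ) < k then g i else 0

lemma PS_zero {n : ℕ} (g : Fin (n + 1) → ℤ) : PS g 0 = 0 := by simp [PS]

lemma PS_succ {n : ℕ} (g : Fin (n + 1) → ℤ) {k : ℕ} (h : k < n + 1) :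
    PS g (k + 1) = PS g k + g ⟨k, h⟩ := by
  have key : ∀ i : Fin (n + 1), (if (i : ℕ) < k + 1 then g i else 0)
      = (if (i : ℕ) < k then g i else 0) + (if i = ⟨k, h⟩ then g i else 0) := by
    intro i
    rcases lt_trichotomy (i : ℕ) k with h1 | h1 | h1
    · rw [if_pos (by omega), if_pos h1, if_neg (by simp [Fin.ext_iff]; omega), add_zero]
    · rw [if_pos (by omega), if_neg (by omega), if_pos (by simp [Fin.ext_iff, h1]), zero_add]
    · rw [if_neg (by omega), if_neg (by omega), if_neg (by simp [Fin.ext_iff]; omega), add_zero]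
  simp only [PS, key, Finset.sum_add_distrib]
  congr 1
  rw [Finset.sum_ite_eq' Finset.univ (⟨k, h⟩ : Fin (n + 1)) g, if_pos (Finset.mem_univ _)]

lemma PS_last {n : ℕ} (g : Fin (n + 1) → ℤ) : PS g (n + 1) = ∑ i, g i := by
  unfold PS
  apply Finset.sum_congr rfl
  intro i _
  exact if_pos i.isLt

lemma le_cons_of_not_mem {α : Type*} [DecidableEq α] {x : α} {S N : Multiset α}
    (hx : x ∉ S) (h : S ≤ x ::ₘ N) : S ≤ N := by
  refine Multiset.le_iff_count.2 fun b => ?_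
  have hc := Multiset.le_iff_count.1 h b
  rw [Multiset.count_cons] at hc
  by_cases hb : b = x
  · subst hb
    simp [Multiset.count_eq_zero_of_notMem hx]
  · simpa [hb] using hc

lemma exists_map_le {α β : Type*} [DecidableEq α] [DecidableEq β] (f : α → β) :
    ∀ (S : Multiset β) (m : Multiset α), S ≤ m.map f → ∃ T, T ≤ m ∧ S = T.map f := by
  intro S
  induction S using Multiset.induction with
  | empty => intro m _; exact ⟨0, Multiset.zero_le _, rfl⟩
  | cons b S ih =>
    intro m h
    have hb : b ∈ m.map f := Multiset.mem_of_le h (Multiset.mem_cons_self _ _)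
    obtain ⟨a, ham, hfa⟩ := Multiset.mem_map.1 hb
    have h1 : m.map f = b ::ₘ (m.erase a).map f := by
      rw [← hfa, ← Multiset.map_cons, Multiset.cons_erase ham]
    have h2 : S ≤ (m.erase a).map f := by
      rw [h1] at h
      exact (Multiset.cons_le_cons_iff _).1 h
    obtain ⟨T, hT, rfl⟩ := ih _ h2
    refine ⟨a ::ₘ T, ?_, by rw [Multiset.map_cons, hfa]⟩
    calc a ::ₘ T ≤ a ::ₘ m.erase a := Multiset.cons_le_cons _ hT
    _ = m := Multiset.cons_erase ham

lemma step_invariant {n : ℕ} (vt : Fin (n + 1) → ℤ) (hvt : StrictAnti vt)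
    {M M' : Multiset ℤ} (hstep : chipStep M M') (hcard : Multiset.card M = n + 1)
    (hinv : ∀ S ≤ M, S.sum ≤ PS vt (Multiset.card S)) :
    ∀ S ≤ M', S.sum ≤ PS vt (Multiset.card S) := by
  obtain ⟨a, R, rfl, rfl⟩ := hstep
  intro S hS
  by_cases h1 : a + 1 ∈ S
  · obtain ⟨T, rfl⟩ : ∃ T, S = (a + 1) ::ₘ T := ⟨S.erase (a + 1), (Multiset.cons_erase h1).symm⟩
    have hT : T ≤ (a - 1) ::ₘ R := (Multiset.cons_le_cons_iff _).1 hS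
    by_cases h2 : a - 1 ∈ T
    · obtain ⟨U, rfl⟩ : ∃ U, T = (a - 1) ::ₘ U := ⟨T.erase (a - 1), (Multiset.cons_erase h2).symm⟩
      have hU : U ≤ R := (Multiset.cons_le_cons_iff _).1 hT
      have hb := hinv (a ::ₘ a ::ₘ U)
        (Multiset.cons_le_cons _ (Multiset.cons_le_cons _ hU))
      simp only [Multiset.sum_cons, Multiset.card_cons] at hb ⊢
      linarith
    · have hTR : T ≤ R := le_cons_of_not_mem h2 hT
      have hTM : T ≤ a ::ₘ a ::ₘ R :=
        le_trans hTR (le_trans (Multiset.le_cons_self _ _) (Multiset.le_cons_self _ _))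
      have haT : a ::ₘ T ≤ a ::ₘ a ::ₘ R :=
        Multiset.cons_le_cons _ (le_trans hTR (Multiset.le_cons_self _ _))
      have haaT : a ::ₘ a ::ₘ T ≤ a ::ₘ a ::ₘ R :=
        Multiset.cons_le_cons _ (Multiset.cons_le_cons _ hTR)
      have hb0 := hinv T hTM
      have hb1 := hinv _ haT
      have hb2 := hinv _ haaT
      have hcle : Multiset.card (a ::ₘ a ::ₘ T) ≤ n + 1 := by
        rw [← hcard]; exact Multiset.card_le_card haaT
      set m := Multiset.card T with hm
      have hmn : m + 1 < n + 1 := by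
        simp only [Multiset.card_cons] at hcle; omega
      have hmn' : m < n + 1 := by omega
      simp only [Multiset.sum_cons, Multiset.card_cons] at hb1 hb2 ⊢
      rw [PS_succ vt hmn'] at hb1 ⊢
      rw [PS_succ vt hmn, PS_succ vt hmn'] at hb2
      have hlt : vt ⟨m + 1, hmn⟩ < vt ⟨m, hmn'⟩ := hvt (by simp [Fin.lt_def])
      by_contra hcon
      push_neg at hcon
      linarith
  · have hS' : S ≤ (a - 1) ::ₘ R := le_cons_of_not_mem h1 hS
    by_cases h2 : a - 1 ∈ S
    · obtain ⟨T, rfl⟩ : ∃ T, S = (a - 1) ::ₘ T := ⟨S.erase (a - 1), (Multiset.cons_erase h2).symm⟩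
      have hT : T ≤ R := (Multiset.cons_le_cons_iff _).1 hS'
      have hb := hinv (a ::ₘ T)
        (Multiset.cons_le_cons _ (le_trans hT (Multiset.le_cons_self _ _)))
      simp only [Multiset.sum_cons, Multiset.card_cons] at hb ⊢
      linarith
    · have hSR : S ≤ R := le_cons_of_not_mem h2 hS'
      exact hinv S (le_trans hSR
        (le_trans (Multiset.le_cons_self _ _) (Multiset.le_cons_self _ _)))

lemma nodup_of_stable {M : Multiset ℤ} (h : ¬ ∃ M', chipStep M M') : M.Nodup := by
  rw [Multiset.nodup_iff_count_le_one]
  intro a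
  by_contra hc
  push_neg at hc
  have h2 : Multiset.replicate 2 a ≤ M := Multiset.le_count_iff_replicate_le.1 (by omega)
  obtain ⟨R, hR⟩ := Multiset.le_iff_exists_add.1 h2
  exact h ⟨(a + 1) ::ₘ (a - 1) ::ₘ R, a, R,
    by simp [hR, Multiset.replicate_succ, Multiset.cons_add], rfl⟩

lemma sum_subset_le {n : ℕ} (v : Fin (n + 1) → ℤ)
    (hv : ∀ i j : Fin (n + 1), i ≤ j → v j ≤ v i) :
    ∀ (k : ℕ) (T : Finset (Fin (n + 1))), T.card = k → ∑ i ∈ T, v i ≤ PS v k := by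
  intro k
  induction k with
  | zero =>
    intro T hT
    rw [Finset.card_eq_zero.1 hT]
    simp [PS_zero]
  | succ k ih =>
    intro T hT
    have hne : T.Nonempty := Finset.card_pos.1 (by omega)
    set i0 := T.max' hne with hi0def
    have hi0 : k ≤ (i0 : ℕ) := by
      have hsub : T ⊆ Finset.Iic i0 := fun x hx => Finset.mem_Iic.2 (T.le_max' x hx)
      have hcc := Finset.card_le_card hsub
      rw [Fin.card_Iic] at hcc
      omega
    have hk : k < n + 1 := lt_of_le_of_lt hi0 i0.isLt
    have h1 : ∑ i ∈ T.erase i0, v i ≤ PS v k :=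
      ih _ (by rw [Finset.card_erase_of_mem (T.max'_mem hne), hT]; omega)
    have h2 : v i0 ≤ v ⟨k, hk⟩ := hv _ _ (by rw [Fin.le_def]; exact hi0)
    rw [← Finset.add_sum_erase T v (T.max'_mem hne), PS_succ v hk]
    linarith

lemma strictAnti_gap {n : ℕ} (w : Fin (n + 1) → ℤ) (hw : StrictAnti w) :
    ∀ q p : ℕ, ∀ (hq : q < n + 1) (hp : p < n + 1), p ≤ q →
      w ⟨q, hq⟩ + ((q : ℤ) - (p : ℤ)) ≤ w ⟨p, hp⟩ := by
  intro q
  induction q with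
  | zero =>
    intro p hq hp hpq
    interval_cases p
    simp
  | succ q ih =>
    intro p hq hp hpq
    rcases eq_or_lt_of_le hpq with rfl | h
    · simp
    · have hq' : q < n + 1 := by omega
      have h1 := ih p hq' hp (by omega)
      have h2 : w ⟨q + 1, hq⟩ < w ⟨q, hq'⟩ := hw (by simp [Fin.lt_def])
      push_cast
      push_cast at h1
      linarith


lemma initial_invariant {n : ℕ} (v vt : Fin (n + 1) → ℤ)
    (hv : ∀ i j : Fin (n + 1), i ≤ j → v j ≤ v i)
    (hsum : ∑ i, v i = ∑ i, vt i)
    (hstrict : ∀ i : ℕ, 1 ≤ i → i < n + 1 → PS v i < PS vt i) :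
    ∀ S ≤ Finset.univ.val.map v, S.sum ≤ PS vt (Multiset.card S) := by
  intro S hS
  obtain ⟨T, hT, rfl⟩ := exists_map_le v S Finset.univ.val hS
  have hnd : T.Nodup := Multiset.nodup_of_le hT Finset.univ.nodup
  set Tf : Finset (Fin (n + 1)) := ⟨T, hnd⟩ with hTf
  have hcardle : Tf.card ≤ n + 1 := by
    have h := Multiset.card_le_card hT
    have h' : Multiset.card T ≤ n + 1 := by simpa using h
    exact h'
  have h1 : (T.map v).sum = ∑ i ∈ Tf, v i := rfl
  have hc : Multiset.card (T.map v) = Tf.card := by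
    simp [Tf, Finset.card]
  rw [h1, hc]
  have h2 : ∑ i ∈ Tf, v i ≤ PS v Tf.card := sum_subset_le v hv Tf.card Tf rfl
  have h3 : PS v Tf.card ≤ PS vt Tf.card := by
    rcases Nat.eq_zero_or_pos Tf.card with h | h
    · rw [h, PS_zero, PS_zero]
    rcases Nat.lt_or_ge Tf.card (n + 1) with h' | h'
    · exact (hstrict _ h h').le
    · have he : Tf.card = n + 1 := by omega
      rw [he, PS_last, PS_last, hsum]
  linarith

lemma final {n : ℕ} (vt : Fin (n + 1) → ℤ) (hvt : StrictAnti vt)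
    (hgap : ∀ t₁ t₂ : ℤ,
      (vt (Fin.last n) < t₁ ∧ t₁ < vt 0 ∧ ∀ i, vt i ≠ t₁) →
      (vt (Fin.last n) < t₂ ∧ t₂ < vt 0 ∧ ∀ i, vt i ≠ t₂) → t₁ = t₂)
    (M : Multiset ℤ) (hnd : M.Nodup) (hcard : Multiset.card M = n + 1)
    (hsum : M.sum = PS vt (n + 1))
    (hinv : ∀ S ≤ M, S.sum ≤ PS vt (Multiset.card S)) :
    M = Finset.univ.val.map vt := by
  classical
  set l := M.sort (· ≤ ·) with hldef
  have hlM : (l : Multiset ℤ) = M := Multiset.sort_eq _ _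
  have hl : l.length = n + 1 := by
    have := congrArg Multiset.card hlM
    rwa [Multiset.coe_card, hcard] at this
  have hnd' : l.Nodup := by
    rw [← Multiset.coe_nodup, hlM]; exact hnd
  have hslt : l.SortedLT := (Multiset.pairwise_sort _ _).sortedLE.sortedLT_of_nodup hnd'
  have hmono : StrictMono l.get := hslt.strictMono_get
  set w : Fin (n + 1) → ℤ := fun i => l.get (Fin.cast hl.symm i.rev) with hwdef
  have hw : StrictAnti w := by
    intro i j hij
    exact hmono (show Fin.cast hl.symm j.rev < Fin.cast hl.symm i.rev by
      simpa [Fin.lt_def] using (Fin.rev_lt_rev.2 hij))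
  have dropsum : ∀ k : ℕ, k ≤ n + 1 → PS w k = (l.drop (n + 1 - k)).sum := by
    intro k
    induction k with
    | zero =>
      intro _
      rw [PS_zero, Nat.sub_zero, ← hl, List.drop_length, List.sum_nil]
    | succ k ih =>
      intro hk1
      have hk : k < n + 1 := hk1
      have hnk : n - k < l.length := by omega
      rw [PS_succ w hk, ih (by omega)]
      have hdrop : l.drop (n - k) = l[n - k] :: l.drop (n - k + 1) :=
        List.drop_eq_getElem_cons hnk
      have e1 : n + 1 - (k + 1) = n - k := by omega
      have e2 : n + 1 - k = n - k + 1 := by omega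
      rw [e1, e2, hdrop, List.sum_cons]
      have hidx : Fin.cast hl.symm (Fin.rev ⟨k, hk⟩) = ⟨n - k, hnk⟩ := by
        apply Fin.ext
        simp [Fin.val_rev]
      have hwk : w ⟨k, hk⟩ = l[n - k]'hnk := by
        show l.get _ = _
        rw [hidx]
        exact List.get_eq_getElem ..
      rw [hwk]; ring
  have fle : ∀ k : ℕ, k ≤ n + 1 → PS w k ≤ PS vt k := by
    intro k hk
    have hsub : (↑(l.drop (n + 1 - k)) : Multiset ℤ) ≤ M := by
      rw [← hlM]
      exact Multiset.coe_le.2 (List.drop_sublist _ _).subperm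
    have hc : Multiset.card (↑(l.drop (n + 1 - k)) : Multiset ℤ) = k := by
      rw [Multiset.coe_card, List.length_drop, hl]
      omega
    have hb := hinv _ hsub
    rw [hc] at hb
    rw [dropsum k hk]
    simpa using hb
  have ftop : PS w (n + 1) = PS vt (n + 1) := by
    rw [dropsum (n + 1) le_rfl, Nat.sub_self, List.drop_zero, ← hsum, ← hlM]
    exact Multiset.sum_coe l
  have feq : ∀ k : ℕ, k ≤ n + 1 → PS w k = PS vt k := by
    by_contra hcon
    push_neg at hcon
    have hex : ∃ k, k ≤ n + 1 ∧ PS w k ≠ PS vt k := hcon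
    set k0 := Nat.find hex with hk0def
    obtain ⟨hk0le, hk0ne⟩ := Nat.find_spec hex
    rw [← hk0def] at hk0le hk0ne
    have hk0pos : 1 ≤ k0 := by
      rcases Nat.eq_zero_or_pos k0 with h | h
      · exfalso; apply hk0ne; rw [h, PS_zero, PS_zero]
      · exact h
    have hk0n : k0 ≤ n := by
      rcases Nat.lt_or_ge k0 (n + 1) with h | h
      · omega
      · exfalso; apply hk0ne
        have : k0 = n + 1 := by omega
        rw [this]; exact ftop
    set p := k0 - 1 with hpdef
    have hp1 : p < n + 1 := by omega
    have hDp : PS w p = PS vt p := by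
      by_contra hne
      have := Nat.find_min hex (m := p) (by omega)
      exact this ⟨by omega, hne⟩
    have hex2 : ∃ k, k0 ≤ k ∧ k ≤ n ∧ PS w (k + 1) = PS vt (k + 1) :=
      ⟨n, hk0n, le_rfl, ftop⟩
    set q := Nat.find hex2 with hqdef
    obtain ⟨hqk0, hqn, hDq1⟩ := Nat.find_spec hex2
    rw [← hqdef] at hqk0 hqn hDq1
    have hq1 : q < n + 1 := by omega
    have hDq : PS w q ≠ PS vt q := by
      rcases Nat.eq_or_lt_of_le hqk0 with h | h
      · rw [← h]; exact hk0ne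
      · intro heq
        have := Nat.find_min hex2 (m := q - 1) (by omega)
        apply this
        refine ⟨by omega, by omega, ?_⟩
        have : q - 1 + 1 = q := by omega
        rw [this]; exact heq
    -- strict inequalities at p and q
    have hwp : w ⟨p, hp1⟩ < vt ⟨p, hp1⟩ := by
      have h1 := PS_succ w hp1
      have h2 := PS_succ vt hp1
      have h3 : PS w (p + 1) ≤ PS vt (p + 1) := fle _ (by omega)
      have h4 : PS w (p + 1) ≠ PS vt (p + 1) := by
        have : p + 1 = k0 := by omega
        rw [this]; exact hk0ne
      have h5 : PS w (p + 1) < PS vt (p + 1) := lt_of_le_of_ne h3 h4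
      rw [h1, h2, hDp] at h5
      linarith
    have hwq : vt ⟨q, hq1⟩ < w ⟨q, hq1⟩ := by
      have h1 := PS_succ w hq1
      have h2 := PS_succ vt hq1
      have h5 : PS w q < PS vt q := lt_of_le_of_ne (fle _ (by omega)) hDq
      rw [h1, h2] at hDq1
      linarith
    have hpq : p < q := by omega
    have hgap2 : ((q : ℤ) - p) + 2 ≤ vt ⟨p, hp1⟩ - vt ⟨q, hq1⟩ := by
      have := strictAnti_gap w hw q p hq1 hp1 (by omega)
      linarith
    -- two gaps
    set Pi : Fin (n + 1) := ⟨p, hp1⟩ with hPidef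
    set Qi : Fin (n + 1) := ⟨q, hq1⟩ with hQidef
    set A : Finset ℤ := Finset.Ioo (vt Qi) (vt Pi) with hA
    set B : Finset ℤ := (Finset.Ioo Pi Qi).image vt with hB
    have hcardA : (q : ℤ) - p + 1 ≤ (A.card : ℤ) := by
      rw [hA, Int.card_Ioo]
      rw [Int.toNat_of_nonneg (by linarith)]
      linarith
    have hcardB : (B.card : ℤ) ≤ (q : ℤ) - p - 1 := by
      have h1 : B.card ≤ (Finset.Ioo Pi Qi).card := Finset.card_image_le
      have h2 : (Finset.Ioo Pi Qi).card = q - p - 1 := Fin.card_Ioo Pi Qi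
      have h3 : (B.card : ℤ) ≤ ((q - p - 1 : ℕ) : ℤ) := by exact_mod_cast h2 ▸ h1
      have h4 : ((q - p - 1 : ℕ) : ℤ) = (q : ℤ) - p - 1 := by
        omega
      omega
    have h2le : 1 < (A \ B).card := by
      have h := Finset.card_le_card_sdiff_add_card (s := A) (t := B)
      have h' : (A.card : ℤ) ≤ ((A \ B).card : ℤ) + B.card := by exact_mod_cast h
      have : (2 : ℤ) ≤ ((A \ B).card : ℤ) := by linarith
      have h'' : (1 : ℤ) < ((A \ B).card : ℤ) := by linarith
      exact_mod_cast h''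
    obtain ⟨t₁, ht₁, t₂, ht₂, hne⟩ := Finset.one_lt_card.1 h2le
    have gapProp : ∀ t ∈ A \ B, vt (Fin.last n) < t ∧ t < vt 0 ∧ ∀ i, vt i ≠ t := by
      intro t ht
      obtain ⟨htA, htB⟩ := Finset.mem_sdiff.1 ht
      obtain ⟨hql, hpl⟩ := Finset.mem_Ioo.1 htA
      refine ⟨lt_of_le_of_lt (hvt.antitone (Fin.le_last Qi)) hql,
              lt_of_lt_of_le hpl (hvt.antitone (Fin.zero_le Pi)), ?_⟩
      intro i hi
      apply htB
      refine Finset.mem_image.2 ⟨i, ?_, hi⟩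
      rw [Finset.mem_Ioo]
      constructor
      · by_contra hle
        push_neg at hle
        have := hvt.antitone hle
        rw [hi] at this
        exact absurd this (not_le.2 hpl)
      · by_contra hle
        push_neg at hle
        have := hvt.antitone hle
        rw [hi] at this
        exact absurd this (not_le.2 hql)
    exact hne (hgap t₁ t₂ (gapProp _ ht₁) (gapProp _ ht₂))
  -- conclude w = vt
  have weq : ∀ i : Fin (n + 1), w i = vt i := by
    intro i
    have h1 := PS_succ w i.isLt
    have h2 := PS_succ vt i.isLt
    have e1 : PS w (i : ℕ) = PS vt (i : ℕ) := feq _ (le_of_lt i.isLt)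
    have e2 : PS w ((i : ℕ) + 1) = PS vt ((i : ℕ) + 1) := feq _ i.isLt
    rw [h1, h2, e1] at e2
    simpa using e2
  -- assemble
  have hmapeq : Finset.univ.val.map vt = Finset.univ.val.map w := by
    congr 1
    exact (funext weq).symm
  rw [hmapeq]
  let e : Fin (n + 1) ≃ Fin l.length := Fin.revPerm.trans (finCongr hl.symm)
  have hwe : w = l.get ∘ e := rfl
  rw [hwe, ← Multiset.map_map]
  have huniv : Finset.univ.val.map ⇑e = (Finset.univ : Finset (Fin l.length)).val := by
    have h1 : Finset.univ.val.map ⇑e = (Finset.univ.map e.toEmbedding).val := by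
      rw [Finset.map_val]; rfl
    rw [h1, Finset.map_univ_equiv]
  rw [huniv]
  have h2 : (Finset.univ : Finset (Fin l.length)).val.map l.get = (↑l : Multiset ℤ) := by
    rw [Fin.univ_def]
    show ((List.finRange l.length : Multiset (Fin l.length))).map l.get = _
    rw [Multiset.map_coe, List.map_get_finRange]
  rw [h2, hlM]


/-- unlabeled chip-firing stabilization for connected configurations.
Let `v` be a weakly decreasing configuration of `n + 1` chips and `v~` its
pseudo-stabilization (strictly decreasing, at most one gap, same sum).  If all proper
partial sums of `v` are strictly smaller than those of `v~`, then every maximal chip-firing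
sequence from `v` terminates at `v~`. -/
theorem chip_stabilization (n : ℕ) (v vt : Fin (n + 1) → ℤ)
    (hv : ∀ i j : Fin (n + 1), i ≤ j → v j ≤ v i)
    (hvt : StrictAnti vt)
    (hsum : ∑ i, v i = ∑ i, vt i)
    (hgap : ∀ t₁ t₂ : ℤ,
      (vt (Fin.last n) < t₁ ∧ t₁ < vt 0 ∧ ∀ i, vt i ≠ t₁) →
      (vt (Fin.last n) < t₂ ∧ t₂ < vt 0 ∧ ∀ i, vt i ≠ t₂) → t₁ = t₂)
    (hstrict : ∀ i : ℕ, 1 ≤ i → i < n + 1 →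
      (∑ k : Fin (n + 1), if (k : ℕ) < i then v k else 0) <
      (∑ k : Fin (n + 1), if (k : ℕ) < i then vt k else 0))
    (M : Multiset ℤ)
    (hreach : Relation.ReflTransGen chipStep (Finset.univ.val.map v) M)
    (hstable : ¬ ∃ M', chipStep M M') :
    M = Finset.univ.val.map vt := by
  classical
  have hstrict' : ∀ i : ℕ, 1 ≤ i → i < n + 1 → PS v i < PS vt i := hstrict
  have key : ∀ N : Multiset ℤ, Relation.ReflTransGen chipStep (Finset.univ.val.map v) N →
      Multiset.card N = n + 1 ∧ N.sum = PS vt (n + 1) ∧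
      (∀ S ≤ N, S.sum ≤ PS vt (Multiset.card S)) := by
    intro N hN
    induction hN with
    | refl =>
      refine ⟨by simp, ?_,
        initial_invariant v vt hv hsum hstrict'⟩
      rw [PS_last, ← hsum]
      rfl
    | @tail b c hb hbc ih =>
      obtain ⟨hc, hs, hi⟩ := ih
      refine ⟨?_, ?_, step_invariant vt hvt hbc hc hi⟩
      · obtain ⟨a, R, h1, h2⟩ := hbc
        rw [h2]
        rw [h1] at hc
        simpa using hc
      · obtain ⟨a, R, h1, h2⟩ := hbc
        rw [h2]
        rw [h1] at hs
        simp only [Multiset.sum_cons] at hs ⊢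
        linarith
  obtain ⟨hc, hs, hi⟩ := key M hreach
  exact final vt hvt hgap M (nodup_of_stable hstable) hc hs hi

end CF
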